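/- Let M be a finite-dimensional bigraded k[x,y]-module and let ℓ : ℤ → ℤ² be an injective monotonic map. Then N²(M) ≥ N¹(ℓ*M), where ℓ*M is the pullback one-parameter module and N¹ is the bar-count. In particular, N²(M) ≥ dim M_i for every i ∈ ℤ². -/

import Mathlib

open Module LinearMap

/-- For `i : ℤ × ℤ` (product order) and nonnegative `a`, `b`, we have `i ≤ i + (a, b)`. -/
lemma le_add_nonneg_pair (i : ℤ × ℤ) (a b : ℤ) (ha : 0 ≤ a) (hb : 0 ≤ b) :
    i ≤ i + (a, b) := by
  rw [Prod.le_def]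
  constructor <;> simp only [Prod.fst_add, Prod.snd_add] <;> omega


set_option linter.unusedSectionVars false
section Everything
set_option maxHeartbeats 1000000

section LA
variable {k : Type*} [Field k] {V : ℤ × ℤ → Type*}
  [∀ i, AddCommGroup (V i)] [∀ i, Module k (V i)] [∀ i, FiniteDimensional k (V i)]

lemma finrank_le_map_add_ker {M N : Type*} [AddCommGroup M] [Module k M]
    [FiniteDimensional k M] [AddCommGroup N] [Module k N] [FiniteDimensional k N]
    (g : M →ₗ[k] N) (p : Submodule k M) :
    finrank k p ≤ finrank k (p.map g) + finrank k (LinearMap.ker g) := by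
  have h1 := LinearMap.finrank_range_add_finrank_ker (g.domRestrict p)
  rw [range_domRestrict] at h1
  have h2 : finrank k (LinearMap.ker (g.domRestrict p)) ≤ finrank k (LinearMap.ker g) := by
    rw [ker_domRestrict]
    apply LinearMap.finrank_le_finrank_of_injective
      (f := p.subtype.restrict (p := (LinearMap.ker g).comap p.subtype)
        (q := LinearMap.ker g) (fun x hx => hx))
    intro a b hab
    have h := congrArg Subtype.val hab
    simp only [LinearMap.restrict_apply, Submodule.coe_subtype] at h
    exact Subtype.ext (Subtype.ext h)
  omega

variable (f : ∀ i j : ℤ × ℤ, i ≤ j → (V i →ₗ[k] V j))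

open Classical in
noncomputable def rk (i j : ℤ × ℤ) : ℕ :=
  if h : i ≤ j then finrank k (LinearMap.range (f i j h)) else 0

open Classical in
noncomputable def kd (i j : ℤ × ℤ) : ℕ :=
  if h : i ≤ j then finrank k (LinearMap.ker (f i j h)) else 0

lemma rk_eq {i j : ℤ × ℤ} (h : i ≤ j) : rk f i j = finrank k (LinearMap.range (f i j h)) :=
  dif_pos h

lemma kd_eq {i j : ℤ × ℤ} (h : i ≤ j) : kd f i j = finrank k (LinearMap.ker (f i j h)) :=
  dif_pos h

lemma rk_add_kd {i j : ℤ × ℤ} (h : i ≤ j) : rk f i j + kd f i j = finrank k (V i) := by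
  rw [rk_eq f h, kd_eq f h]; exact LinearMap.finrank_range_add_finrank_ker _

lemma rk_le_src (i j : ℤ × ℤ) : rk f i j ≤ finrank k (V i) := by
  unfold rk; split
  · exact LinearMap.finrank_range_le _
  · omega

lemma rk_le_tgt (i j : ℤ × ℤ) : rk f i j ≤ finrank k (V j) := by
  unfold rk; split
  · exact Submodule.finrank_le _
  · omega

lemma kd_le_src (i j : ℤ × ℤ) : kd f i j ≤ finrank k (V i) := by
  unfold kd; split
  · exact Submodule.finrank_le _
  · omega

variable (hcomp : ∀ (i j l : ℤ × ℤ) (hij : i ≤ j) (hjl : j ≤ l),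
      f i l (hij.trans hjl) = (f j l hjl) ∘ₗ (f i j hij))

include hcomp in
lemma rk_anti {i j l : ℤ × ℤ} (hij : i ≤ j) (hjl : j ≤ l) : rk f i l ≤ rk f i j := by
  rw [rk_eq f (hij.trans hjl), rk_eq f hij, hcomp i j l hij hjl, LinearMap.range_comp]
  exact Submodule.finrank_map_le _ _

include hcomp in
lemma drop_le {i j l : ℤ × ℤ} (hij : i ≤ j) (hjl : j ≤ l) :
    rk f i j ≤ rk f i l + kd f j l := by
  rw [rk_eq f (hij.trans hjl), rk_eq f hij, kd_eq f hjl, hcomp i j l hij hjl,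
    LinearMap.range_comp]
  exact finrank_le_map_add_ker _ _

include hcomp in
lemma kd_comp {i j l : ℤ × ℤ} (hij : i ≤ j) (hjl : j ≤ l) :
    kd f i l ≤ kd f i j + kd f j l := by
  have h1 := rk_add_kd f hij
  have h2 := rk_add_kd f (hij.trans hjl)
  have h3 := drop_le f hcomp hij hjl
  omega


variable (hid : ∀ i, f i i le_rfl = LinearMap.id)

include hid in
lemma kd_refl (i : ℤ × ℤ) : kd f i i = 0 := by
  rw [kd_eq f le_rfl, hid i]
  simp
  exact finrank_bot k (V i)

include hcomp hid in
lemma kd_vert (x y : ℤ) (b : ℕ) :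
    kd f (x, y) (x, y + (b : ℤ)) ≤
      ∑ t ∈ Finset.range b, kd f (x, y + (t : ℤ)) ((x, y + (t : ℤ)) + (0, 1)) := by
  induction b with
  | zero => simp [kd_refl f hid]
  | succ b ih =>
    have e1 : ((x : ℤ), y + ((b + 1 : ℕ) : ℤ)) = (x, y + (b : ℤ) + 1) :=
      Prod.ext rfl (by push_cast; ring)
    have e2 : ((x : ℤ), y + (b : ℤ)) + (0, 1) = (x, y + (b : ℤ) + 1) :=
      Prod.ext (by simp) rfl
    have h1 : ((x : ℤ), y) ≤ (x, y + (b : ℤ)) := Prod.mk_le_mk.mpr ⟨le_rfl, by omega⟩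
    have h2 : ((x : ℤ), y + (b : ℤ)) ≤ (x, y + (b : ℤ) + 1) :=
      Prod.mk_le_mk.mpr ⟨le_rfl, by omega⟩
    calc kd f (x, y) (x, y + ((b + 1 : ℕ) : ℤ))
        = kd f (x, y) (x, y + (b : ℤ) + 1) := by rw [e1]
      _ ≤ kd f (x, y) (x, y + (b : ℤ)) + kd f (x, y + (b : ℤ)) (x, y + (b : ℤ) + 1) :=
          kd_comp f hcomp h1 h2
      _ ≤ (∑ t ∈ Finset.range b, kd f (x, y + (t : ℤ)) ((x, y + (t : ℤ)) + (0, 1)))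
            + kd f (x, y + (b : ℤ)) (x, y + (b : ℤ) + 1) := add_le_add_left ih _
      _ = ∑ t ∈ Finset.range (b + 1), kd f (x, y + (t : ℤ)) ((x, y + (t : ℤ)) + (0, 1)) := by
          rw [Finset.sum_range_succ, e2]

include hcomp hid in
lemma kd_horiz (x y : ℤ) (b : ℕ) :
    kd f (x, y) (x + (b : ℤ), y) ≤
      ∑ t ∈ Finset.range b, kd f (x + (t : ℤ), y) ((x + (t : ℤ), y) + (1, 0)) := by
  induction b with
  | zero => simp [kd_refl f hid]
  | succ b ih =>
    have e1 : (x + ((b + 1 : ℕ) : ℤ), y) = (x + (b : ℤ) + 1, y) :=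
      Prod.ext (by push_cast; ring) rfl
    have e2 : (x + (b : ℤ), y) + (1, 0) = (x + (b : ℤ) + 1, y) :=
      Prod.ext rfl (by simp)
    have h1 : ((x : ℤ), y) ≤ (x + (b : ℤ), y) := Prod.mk_le_mk.mpr ⟨by omega, le_rfl⟩
    have h2 : (x + (b : ℤ), y) ≤ (x + (b : ℤ) + 1, y) :=
      Prod.mk_le_mk.mpr ⟨by omega, le_rfl⟩
    calc kd f (x, y) (x + ((b + 1 : ℕ) : ℤ), y)
        = kd f (x, y) (x + (b : ℤ) + 1, y) := by rw [e1]
      _ ≤ kd f (x, y) (x + (b : ℤ), y) + kd f (x + (b : ℤ), y) (x + (b : ℤ) + 1, y) :=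
          kd_comp f hcomp h1 h2
      _ ≤ (∑ t ∈ Finset.range b, kd f (x + (t : ℤ), y) ((x + (t : ℤ), y) + (1, 0)))
            + kd f (x + (b : ℤ), y) (x + (b : ℤ) + 1, y) := add_le_add_left ih _
      _ = ∑ t ∈ Finset.range (b + 1), kd f (x + (t : ℤ), y) ((x + (t : ℤ), y) + (1, 0)) := by
          rw [Finset.sum_range_succ, e2]

end LA
section Regions
variable (ℓ : ℤ → ℤ × ℤ)

/-- The region weakly right of / strictly below the staircase through `ℓ`. -/
def R2 (i : ℤ × ℤ) : Prop := ∃ j : ℤ, (ℓ j).1 ≤ i.1 ∧ i.2 < (ℓ (j + 1)).2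

/-- Horizontal unit steps of the staircase through `ℓ`. -/
def HP (p : ℤ × ℤ) : Prop :=
  ∃ j : ℤ, p.2 = (ℓ (j + 1)).2 ∧ (ℓ j).1 ≤ p.1 ∧ p.1 < (ℓ (j + 1)).1

/-- Vertical unit steps of the staircase through `ℓ`. -/
def VP (q : ℤ × ℤ) : Prop :=
  ∃ j : ℤ, q.1 = (ℓ j).1 ∧ (ℓ j).2 ≤ q.2 ∧ q.2 < (ℓ (j + 1)).2

variable {ℓ} (hmono : Monotone ℓ)

include hmono

private lemma m1 {a b : ℤ} (h : a ≤ b) : (ℓ a).1 ≤ (ℓ b).1 := (hmono h).1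
private lemma m2 {a b : ℤ} (h : a ≤ b) : (ℓ a).2 ≤ (ℓ b).2 := (hmono h).2

lemma VP_R2 {q : ℤ × ℤ} (h : VP ℓ q) : R2 ℓ q := by
  obtain ⟨j, h1, h2, h3⟩ := h
  exact ⟨j, le_of_eq h1.symm, h3⟩

lemma HP_not_R2 {p : ℤ × ℤ} (h : HP ℓ p) : ¬ R2 ℓ p := by
  obtain ⟨j, hy, hx1, hx2⟩ := h
  rintro ⟨j', hx', hy'⟩
  rcases le_or_gt (j' + 1) (j + 1) with hle | hlt
  · have := m2 hmono hle
    omega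
  · have : j + 1 ≤ j' := by omega
    have := m1 hmono this
    omega

lemma R2_right {i : ℤ × ℤ} (h : R2 ℓ i) : R2 ℓ (i + (1, 0)) := by
  obtain ⟨j, h1, h2⟩ := h
  exact ⟨j, by simp; omega, by simp; omega⟩

lemma R2_of_up {i : ℤ × ℤ} (h : R2 ℓ (i + (0, 1))) : R2 ℓ i := by
  obtain ⟨j, h1, h2⟩ := h
  simp only [Prod.fst_add, Prod.snd_add] at h1 h2
  exact ⟨j, by omega, by omega⟩

lemma R2_of_HP_up {i : ℤ × ℤ} (h : HP ℓ (i + (0, 1))) : R2 ℓ i := by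
  obtain ⟨j, h1, h2, h3⟩ := h
  simp only [Prod.fst_add, Prod.snd_add] at h1 h2 h3
  exact ⟨j, by omega, by omega⟩

lemma not_VP_right {i : ℤ × ℤ} (h : R2 ℓ i) : ¬ VP ℓ (i + (1, 0)) := by
  obtain ⟨j', hx', hy'⟩ := h
  rintro ⟨j, h1, h2, h3⟩
  simp only [Prod.fst_add, Prod.snd_add] at h1 h2 h3
  rcases le_or_gt j j' with hle | hlt
  · have := m1 hmono hle
    omega
  · have : j' + 1 ≤ j := by omega
    have := m2 hmono this
    omega

end Regions

section Stairs
variable (ℓ : ℤ → ℤ × ℤ)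

noncomputable def Qf (j : ℤ) : Finset (ℤ × ℤ) :=
  (Finset.range ((ℓ (j + 1)).2 - (ℓ j).2).toNat).image
    (fun t : ℕ => ((ℓ j).1, (ℓ j).2 + (t : ℤ)))

noncomputable def Pf (j : ℤ) : Finset (ℤ × ℤ) :=
  (Finset.range ((ℓ (j + 1)).1 - (ℓ j).1).toNat).image
    (fun t : ℕ => ((ℓ j).1 + (t : ℤ), (ℓ (j + 1)).2))

lemma mem_Qf {j : ℤ} {a : ℤ × ℤ} :
    a ∈ Qf ℓ j ↔ a.1 = (ℓ j).1 ∧ (ℓ j).2 ≤ a.2 ∧ a.2 < (ℓ (j + 1)).2 := by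
  simp only [Qf, Finset.mem_image, Finset.mem_range]
  constructor
  · rintro ⟨t, ht, rfl⟩
    exact ⟨rfl, by omega, by omega⟩
  · rintro ⟨h1, h2, h3⟩
    refine ⟨(a.2 - (ℓ j).2).toNat, by omega, ?_⟩
    have h4 : (ℓ j).2 + ((a.2 - (ℓ j).2).toNat : ℤ) = a.2 := by omega
    rw [h4, ← h1]

lemma mem_Pf {j : ℤ} {a : ℤ × ℤ} :
    a ∈ Pf ℓ j ↔ a.2 = (ℓ (j + 1)).2 ∧ (ℓ j).1 ≤ a.1 ∧ a.1 < (ℓ (j + 1)).1 := by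
  simp only [Pf, Finset.mem_image, Finset.mem_range]
  constructor
  · rintro ⟨t, ht, rfl⟩
    exact ⟨rfl, by omega, by omega⟩
  · rintro ⟨h1, h2, h3⟩
    refine ⟨(a.1 - (ℓ j).1).toNat, by omega, ?_⟩
    have h4 : (ℓ j).1 + ((a.1 - (ℓ j).1).toNat : ℤ) = a.1 := by omega
    rw [h4, ← h1]

variable {ℓ} (hmono : Monotone ℓ)
include hmono

lemma Qf_disj {j j' : ℤ} (h : j ≠ j') : Disjoint (Qf ℓ j) (Qf ℓ j') := by
  rw [Finset.disjoint_left]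
  intro a ha ha'
  rw [mem_Qf] at ha ha'
  rcases lt_or_gt_of_ne h with hlt | hlt
  · have := (hmono (show j + 1 ≤ j' by omega)).2
    omega
  · have := (hmono (show j' + 1 ≤ j by omega)).2
    omega

lemma Pf_disj {j j' : ℤ} (h : j ≠ j') : Disjoint (Pf ℓ j) (Pf ℓ j') := by
  rw [Finset.disjoint_left]
  intro a ha ha'
  rw [mem_Pf] at ha ha'
  rcases lt_or_gt_of_ne h with hlt | hlt
  · have := (hmono (show j + 1 ≤ j' by omega)).1
    omega
  · have := (hmono (show j' + 1 ≤ j by omega)).1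
    omega

end Stairs

lemma sum_le_sum_of_support {α M : Type*} [DecidableEq α] [AddCommMonoid M] [PartialOrder M] [IsOrderedAddMonoid M]
    {g : α → M} {s t : Finset α}
    (hsup : ∀ x ∈ s, g x ≠ 0 → x ∈ t) (hnn : ∀ x, 0 ≤ g x) :
    ∑ x ∈ s, g x ≤ ∑ x ∈ t, g x := by
  classical
  calc ∑ x ∈ s, g x = ∑ x ∈ s.filter (fun x => g x ≠ 0), g x :=
        (Finset.sum_filter_ne_zero s).symm
    _ ≤ ∑ x ∈ t, g x := by
        apply Finset.sum_le_sum_of_subset_of_nonneg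
        · intro x hx
          rw [Finset.mem_filter] at hx
          exact hsup x hx.1 hx.2
        · intro x _ _
          exact hnn x

section Main
variable {k : Type*} [Field k] {V : ℤ × ℤ → Type*}
  [∀ i, AddCommGroup (V i)] [∀ i, Module k (V i)] [∀ i, FiniteDimensional k (V i)]
  (f : ∀ i j : ℤ × ℤ, i ≤ j → (V i →ₗ[k] V j))
  (hid : ∀ i, f i i le_rfl = LinearMap.id)
  (hcomp : ∀ (i j l : ℤ × ℤ) (hij : i ≤ j) (hjl : j ≤ l),
      f i l (hij.trans hjl) = (f j l hjl) ∘ₗ (f i j hij))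

include hcomp hid in
lemma step_bound (ℓ : ℤ → ℤ × ℤ) (hmono : Monotone ℓ) (j : ℤ) :
    kd f (ℓ j) (ℓ (j + 1)) ≤
      (∑ q ∈ Qf ℓ j, kd f q (q + (0, 1))) + ∑ p ∈ Pf ℓ j, kd f p (p + (1, 0)) := by
  have hm : ℓ j ≤ ℓ (j + 1) := hmono (by omega)
  have hx : (ℓ j).1 ≤ (ℓ (j + 1)).1 := hm.1
  have hy : (ℓ j).2 ≤ (ℓ (j + 1)).2 := hm.2
  have h1 : ℓ j ≤ ((ℓ j).1, (ℓ (j + 1)).2) := Prod.le_def.mpr ⟨le_rfl, hm.2⟩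
  have h2 : ((ℓ j).1, (ℓ (j + 1)).2) ≤ ℓ (j + 1) := Prod.le_def.mpr ⟨hm.1, le_rfl⟩
  have hs := kd_comp f hcomp h1 h2
  have hv : kd f (ℓ j) ((ℓ j).1, (ℓ (j + 1)).2) ≤ ∑ q ∈ Qf ℓ j, kd f q (q + (0, 1)) := by
    have hb := kd_vert f hcomp hid (ℓ j).1 (ℓ j).2 ((ℓ (j + 1)).2 - (ℓ j).2).toNat
    rw [show ((ℓ j).1, (ℓ j).2 + ((((ℓ (j + 1)).2 - (ℓ j).2).toNat : ℕ) : ℤ))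
        = ((ℓ j).1, (ℓ (j + 1)).2) from Prod.ext rfl (by omega)] at hb
    rw [Prod.mk.eta] at hb
    calc kd f (ℓ j) ((ℓ j).1, (ℓ (j + 1)).2)
        ≤ ∑ t ∈ Finset.range ((ℓ (j + 1)).2 - (ℓ j).2).toNat,
            kd f ((ℓ j).1, (ℓ j).2 + (t : ℤ)) (((ℓ j).1, (ℓ j).2 + (t : ℤ)) + (0, 1)) := hb
      _ = ∑ q ∈ Qf ℓ j, kd f q (q + (0, 1)) := by
          rw [Qf, Finset.sum_image]
          intro a _ b _ h
          have := congrArg Prod.snd h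
          simp only at this
          omega
  have hh : kd f ((ℓ j).1, (ℓ (j + 1)).2) (ℓ (j + 1)) ≤ ∑ p ∈ Pf ℓ j, kd f p (p + (1, 0)) := by
    have hb := kd_horiz f hcomp hid (ℓ j).1 (ℓ (j + 1)).2 ((ℓ (j + 1)).1 - (ℓ j).1).toNat
    rw [show ((ℓ j).1 + ((((ℓ (j + 1)).1 - (ℓ j).1).toNat : ℕ) : ℤ), (ℓ (j + 1)).2)
        = ℓ (j + 1) from Prod.ext (by omega) rfl] at hb
    calc kd f ((ℓ j).1, (ℓ (j + 1)).2) (ℓ (j + 1))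
        ≤ ∑ t ∈ Finset.range ((ℓ (j + 1)).1 - (ℓ j).1).toNat,
            kd f ((ℓ j).1 + (t : ℤ), (ℓ (j + 1)).2) (((ℓ j).1 + (t : ℤ), (ℓ (j + 1)).2) + (1, 0)) := hb
      _ = ∑ p ∈ Pf ℓ j, kd f p (p + (1, 0)) := by
          rw [Pf, Finset.sum_image]
          intro a _ b _ h
          have := congrArg Prod.fst h
          simp only at this
          omega
  omega


lemma le_add_nonneg_pair' (i : ℤ × ℤ) (a b : ℤ) (ha : 0 ≤ a) (hb : 0 ≤ b) :
    i ≤ i + (a, b) := by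
  rw [Prod.le_def]
  constructor <;> simp only [Prod.fst_add, Prod.snd_add] <;> omega

lemma sub_pair_le (p : ℤ × ℤ) (a b : ℤ) (ha : 0 ≤ a) (hb : 0 ≤ b) : p - (a, b) ≤ p := by
  rw [Prod.le_def]
  constructor <;> simp only [Prod.fst_sub, Prod.snd_sub] <;> omega

noncomputable def B1 (p : ℤ × ℤ) : ℤ :=
  (rk f (p - (0, 1)) p : ℤ) - (rk f (p - (0, 1)) (p + (1, 0)) : ℤ)

noncomputable def B2 (p : ℤ × ℤ) : ℤ :=
  (rk f (p - (1, 0)) p : ℤ) - (rk f (p - (1, 0)) (p + (0, 1)) : ℤ)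

include hcomp in
lemma b1_nonneg (p : ℤ × ℤ) : 0 ≤ B1 f p := by
  have := rk_anti f hcomp (sub_pair_le p 0 1 le_rfl zero_le_one)
    (le_add_nonneg_pair' p 1 0 zero_le_one le_rfl)
  unfold B1; omega

include hcomp in
lemma b2_nonneg (p : ℤ × ℤ) : 0 ≤ B2 f p := by
  have := rk_anti f hcomp (sub_pair_le p 1 0 zero_le_one le_rfl)
    (le_add_nonneg_pair' p 0 1 le_rfl zero_le_one)
  unfold B2; omega

include hcomp in
lemma b1_le_kd (p : ℤ × ℤ) : B1 f p ≤ (kd f p (p + (1, 0)) : ℤ) := by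
  have := drop_le f hcomp (sub_pair_le p 0 1 le_rfl zero_le_one)
    (le_add_nonneg_pair' p 1 0 zero_le_one le_rfl)
  unfold B1; omega

include hcomp in
lemma b2_le_kd (p : ℤ × ℤ) : B2 f p ≤ (kd f p (p + (0, 1)) : ℤ) := by
  have := drop_le f hcomp (sub_pair_le p 1 0 zero_le_one le_rfl)
    (le_add_nonneg_pair' p 0 1 le_rfl zero_le_one)
  unfold B2; omega

include hcomp in
lemma b1_supp (p : ℤ × ℤ) (h : finrank k (V p) = 0) : B1 f p = 0 := by
  have h1 := rk_le_tgt f (p - (0, 1)) p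
  have h2 := rk_anti f hcomp (sub_pair_le p 0 1 le_rfl zero_le_one)
    (le_add_nonneg_pair' p 1 0 zero_le_one le_rfl)
  unfold B1; omega

include hcomp in
lemma b2_supp (p : ℤ × ℤ) (h : finrank k (V p) = 0) : B2 f p = 0 := by
  have h1 := rk_le_tgt f (p - (1, 0)) p
  have h2 := rk_anti f hcomp (sub_pair_le p 1 0 zero_le_one le_rfl)
    (le_add_nonneg_pair' p 0 1 le_rfl zero_le_one)
  unfold B2; omega

lemma b1_shift (i : ℤ × ℤ) :
    B1 f (i + (0, 1)) = (rk f i (i + (0, 1)) : ℤ) - (rk f i (i + (1, 1)) : ℤ) := by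
  have e1 : i + (0, 1) - (0, 1) = i := by ring
  have e2 : i + (0, 1) + (1, 0) = i + (1, 1) := by
    simp only [Prod.ext_iff, Prod.fst_add, Prod.snd_add]; omega
  unfold B1; rw [e1, e2]

lemma b2_shift (i : ℤ × ℤ) :
    B2 f (i + (1, 0)) = (rk f i (i + (1, 0)) : ℤ) - (rk f i (i + (1, 1)) : ℤ) := by
  have e1 : i + (1, 0) - (1, 0) = i := by ring
  have e2 : i + (1, 0) + (0, 1) = i + (1, 1) := by
    simp only [Prod.ext_iff, Prod.fst_add, Prod.snd_add]; omega
  unfold B2; rw [e1, e2]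

/-- The two decompositions of the `N²` summand. -/
lemma g_eq1 (i : ℤ × ℤ) :
    (finrank k (V i) : ℤ) - rk f i (i + (1, 0)) - rk f i (i + (0, 1)) + rk f i (i + (1, 1))
      = (kd f i (i + (1, 0)) : ℤ) - B1 f (i + (0, 1)) := by
  rw [b1_shift]
  have := rk_add_kd f (le_add_nonneg_pair' i 1 0 zero_le_one le_rfl)
  omega

lemma g_eq2 (i : ℤ × ℤ) :
    (finrank k (V i) : ℤ) - rk f i (i + (1, 0)) - rk f i (i + (0, 1)) + rk f i (i + (1, 1))
      = (kd f i (i + (0, 1)) : ℤ) - B2 f (i + (1, 0)) := by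
  rw [b2_shift]
  have := rk_add_kd f (le_add_nonneg_pair' i 0 1 le_rfl zero_le_one)
  omega


include hid hcomp in
lemma key (S : Finset (ℤ × ℤ)) (hS : ∀ i ∉ S, Subsingleton (V i))
    (ℓ : ℤ → ℤ × ℤ) (hmono : Monotone ℓ) (hinj : Function.Injective ℓ) :
    ((∑ᶠ j : ℤ, ((finrank k (V (ℓ j)) : ℤ)
        - finrank k (LinearMap.range (f (ℓ j) (ℓ (j + 1)) (hmono (by simp))))))
      ≤ ∑ᶠ i : ℤ × ℤ, ((finrank k (V i) : ℤ)
        - finrank k (LinearMap.range (f i (i + (1, 0))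
            (le_add_nonneg_pair' i 1 0 (by norm_num) (by norm_num))))
        - finrank k (LinearMap.range (f i (i + (0, 1))
            (le_add_nonneg_pair' i 0 1 (by norm_num) (by norm_num))))
        + finrank k (LinearMap.range (f i (i + (1, 1))
            (le_add_nonneg_pair' i 1 1 (by norm_num) (by norm_num)))))) := by
  classical
  have hdim0 : ∀ i, i ∉ S → finrank k (V i) = 0 := fun i hi =>
    have := hS i hi; Module.finrank_zero_of_subsingleton
  -- body rewriting lemmas
  have body1 : ∀ (j : ℤ) (h : ℓ j ≤ ℓ (j + 1)),
      ((finrank k (V (ℓ j)) : ℤ) - finrank k (LinearMap.range (f (ℓ j) (ℓ (j + 1)) h)))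
        = (kd f (ℓ j) (ℓ (j + 1)) : ℤ) := by
    intro j h
    rw [← rk_eq f h]
    have := rk_add_kd f h
    omega
  have body2 : ∀ (i : ℤ × ℤ) (h1 : i ≤ i + (1, 0)) (h2 : i ≤ i + (0, 1))
      (h3 : i ≤ i + (1, 1)),
      ((finrank k (V i) : ℤ) - finrank k (LinearMap.range (f i (i + (1, 0)) h1))
        - finrank k (LinearMap.range (f i (i + (0, 1)) h2))
        + finrank k (LinearMap.range (f i (i + (1, 1)) h3)))
      = ((finrank k (V i) : ℤ) - rk f i (i + (1, 0)) - rk f i (i + (0, 1))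
          + rk f i (i + (1, 1))) := by
    intro i h1 h2 h3
    rw [← rk_eq f h1, ← rk_eq f h2, ← rk_eq f h3]
  -- convert LHS finsum to a Finset sum
  set T : Finset ℤ := S.preimage ℓ hinj.injOn with hT
  have eL : (∑ᶠ j : ℤ, ((finrank k (V (ℓ j)) : ℤ)
        - finrank k (LinearMap.range (f (ℓ j) (ℓ (j + 1)) (hmono (by simp))))))
      = ∑ j ∈ T, (kd f (ℓ j) (ℓ (j + 1)) : ℤ) := by
    rw [finsum_eq_finset_sum_of_support_subset _ (s := T) ?_]
    · exact Finset.sum_congr rfl fun j _ => body1 j _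
    · intro j hj
      rw [Function.mem_support] at hj
      simp only [Finset.coe_preimage, Set.mem_preimage, hT, Finset.mem_coe,
        Finset.mem_preimage]
      by_contra hn
      apply hj
      rw [body1 j (hmono (by simp))]
      have h1 := kd_le_src f (ℓ j) (ℓ (j + 1))
      have h2 := hdim0 _ hn
      omega
  -- convert RHS finsum to a Finset sum
  have eR : (∑ᶠ i : ℤ × ℤ, ((finrank k (V i) : ℤ)
        - finrank k (LinearMap.range (f i (i + (1, 0))
            (le_add_nonneg_pair' i 1 0 (by norm_num) (by norm_num))))
        - finrank k (LinearMap.range (f i (i + (0, 1))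
            (le_add_nonneg_pair' i 0 1 (by norm_num) (by norm_num))))
        + finrank k (LinearMap.range (f i (i + (1, 1))
            (le_add_nonneg_pair' i 1 1 (by norm_num) (by norm_num))))))
      = ∑ i ∈ S, ((finrank k (V i) : ℤ) - rk f i (i + (1, 0)) - rk f i (i + (0, 1))
          + rk f i (i + (1, 1))) := by
    rw [finsum_eq_finset_sum_of_support_subset _ (s := S) ?_]
    · exact Finset.sum_congr rfl fun i _ => body2 i _ _ _
    · intro i hi
      rw [Function.mem_support] at hi
      by_contra hn
      apply hi
      rw [body2 i _ _ _]
      have h1 := rk_le_src f i (i + (1, 0))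
      have h2 := rk_le_src f i (i + (0, 1))
      have h3 := rk_le_src f i (i + (1, 1))
      have h4 := hdim0 _ hn
      omega
  rw [eL, eR]
  -- the ℕ-valued chain bound for the left side
  have chain : (∑ j ∈ T, kd f (ℓ j) (ℓ (j + 1)))
      ≤ (∑ p ∈ S.filter (VP ℓ), kd f p (p + (0, 1)))
        + ∑ p ∈ S.filter (HP ℓ), kd f p (p + (1, 0)) := by
    calc (∑ j ∈ T, kd f (ℓ j) (ℓ (j + 1)))
        ≤ ∑ j ∈ T, ((∑ q ∈ Qf ℓ j, kd f q (q + (0, 1)))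
            + ∑ p ∈ Pf ℓ j, kd f p (p + (1, 0))) :=
          Finset.sum_le_sum fun j _ => step_bound f hid hcomp ℓ hmono j
      _ = (∑ j ∈ T, ∑ q ∈ Qf ℓ j, kd f q (q + (0, 1)))
            + ∑ j ∈ T, ∑ p ∈ Pf ℓ j, kd f p (p + (1, 0)) := Finset.sum_add_distrib
      _ = (∑ q ∈ T.biUnion (Qf ℓ), kd f q (q + (0, 1)))
            + ∑ p ∈ T.biUnion (Pf ℓ), kd f p (p + (1, 0)) := by
          rw [Finset.sum_biUnion, Finset.sum_biUnion]
          · exact fun a _ b _ hab => Pf_disj hmono hab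
          · exact fun a _ b _ hab => Qf_disj hmono hab
      _ ≤ (∑ p ∈ S.filter (VP ℓ), kd f p (p + (0, 1)))
            + ∑ p ∈ S.filter (HP ℓ), kd f p (p + (1, 0)) := by
          apply add_le_add
          · apply sum_le_sum_of_support _ (fun x => Nat.zero_le _)
            intro q hq hne
            rw [Finset.mem_biUnion] at hq
            obtain ⟨j, _, hqj⟩ := hq
            rw [mem_Qf] at hqj
            rw [Finset.mem_filter]
            constructor
            · by_contra hn
              have := kd_le_src f q (q + (0, 1))
              have := hdim0 _ hn
              omega
            · exact ⟨j, hqj.1, hqj.2.1, hqj.2.2⟩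
          · apply sum_le_sum_of_support _ (fun x => Nat.zero_le _)
            intro p hp hne
            rw [Finset.mem_biUnion] at hp
            obtain ⟨j, _, hpj⟩ := hp
            rw [mem_Pf] at hpj
            rw [Finset.mem_filter]
            constructor
            · by_contra hn
              have := kd_le_src f p (p + (1, 0))
              have := hdim0 _ hn
              omega
            · exact ⟨j, hpj.1, hpj.2.1, hpj.2.2⟩
  -- lower bound for the region sums
  have hP1 : ∑ p ∈ S.filter (HP ℓ), (kd f p (p + (1, 0)) : ℤ)
      ≤ ∑ i ∈ S.filter (fun i => ¬ R2 ℓ i),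
          ((finrank k (V i) : ℤ) - rk f i (i + (1, 0)) - rk f i (i + (0, 1))
            + rk f i (i + (1, 1))) := by
    have e0 : ∑ i ∈ S.filter (fun i => ¬ R2 ℓ i),
        ((finrank k (V i) : ℤ) - rk f i (i + (1, 0)) - rk f i (i + (0, 1))
          + rk f i (i + (1, 1)))
        = (∑ i ∈ S.filter (fun i => ¬ R2 ℓ i), (kd f i (i + (1, 0)) : ℤ))
          - ∑ i ∈ S.filter (fun i => ¬ R2 ℓ i), B1 f (i + (0, 1)) := by
      rw [← Finset.sum_sub_distrib]
      exact Finset.sum_congr rfl fun i _ => g_eq1 f i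
    have e1 : ∑ i ∈ S.filter (fun i => ¬ R2 ℓ i), B1 f (i + (0, 1))
        = ∑ p ∈ (S.filter (fun i => ¬ R2 ℓ i)).image (· + (0, 1)), B1 f p :=
      (Finset.sum_image fun a _ b _ h => by
        simpa using congrArg (· - ((0 : ℤ), (1 : ℤ))) h).symm
    have e2 : ∑ p ∈ (S.filter (fun i => ¬ R2 ℓ i)).image (· + (0, 1)), B1 f p
        ≤ ∑ p ∈ (S.filter (fun i => ¬ R2 ℓ i)).filter (fun p => ¬ HP ℓ p), B1 f p := by
      apply sum_le_sum_of_support _ (b1_nonneg f hcomp)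
      intro p hp hne
      rw [Finset.mem_image] at hp
      obtain ⟨i, hi, rfl⟩ := hp
      rw [Finset.mem_filter] at hi
      rw [Finset.mem_filter, Finset.mem_filter]
      have hpS : i + (0, 1) ∈ S := by
        by_contra hn
        exact hne (b1_supp f hcomp _ (hdim0 _ hn))
      refine ⟨⟨hpS, ?_⟩, ?_⟩
      · intro hR2
        exact hi.2 (R2_of_up hmono hR2)
      · intro hHP
        exact hi.2 (R2_of_HP_up hmono hHP)
    have e3 : ∑ i ∈ S.filter (fun i => ¬ R2 ℓ i), (kd f i (i + (1, 0)) : ℤ)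
        = (∑ i ∈ (S.filter (fun i => ¬ R2 ℓ i)).filter (HP ℓ), (kd f i (i + (1, 0)) : ℤ))
          + ∑ i ∈ (S.filter (fun i => ¬ R2 ℓ i)).filter (fun i => ¬ HP ℓ i),
              (kd f i (i + (1, 0)) : ℤ) :=
      (Finset.sum_filter_add_sum_filter_not _ _ _).symm
    have e4 : ∑ p ∈ (S.filter (fun i => ¬ R2 ℓ i)).filter (fun p => ¬ HP ℓ p), B1 f p
        ≤ ∑ i ∈ (S.filter (fun i => ¬ R2 ℓ i)).filter (fun i => ¬ HP ℓ i),
            (kd f i (i + (1, 0)) : ℤ) :=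
      Finset.sum_le_sum fun p _ => b1_le_kd f hcomp p
    have e5 : (S.filter (fun i => ¬ R2 ℓ i)).filter (HP ℓ) = S.filter (HP ℓ) := by
      ext a
      simp only [Finset.filter_filter, Finset.mem_filter]
      constructor
      · rintro ⟨h1, h2, h3⟩
        exact ⟨h1, h3⟩
      · rintro ⟨h1, h2⟩
        exact ⟨h1, HP_not_R2 hmono h2, h2⟩
    rw [e0, e3, e5, e1]
    linarith [e2, e4]
  have hP2 : ∑ p ∈ S.filter (VP ℓ), (kd f p (p + (0, 1)) : ℤ)
      ≤ ∑ i ∈ S.filter (fun i => R2 ℓ i),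
          ((finrank k (V i) : ℤ) - rk f i (i + (1, 0)) - rk f i (i + (0, 1))
            + rk f i (i + (1, 1))) := by
    have e0 : ∑ i ∈ S.filter (fun i => R2 ℓ i),
        ((finrank k (V i) : ℤ) - rk f i (i + (1, 0)) - rk f i (i + (0, 1))
          + rk f i (i + (1, 1)))
        = (∑ i ∈ S.filter (fun i => R2 ℓ i), (kd f i (i + (0, 1)) : ℤ))
          - ∑ i ∈ S.filter (fun i => R2 ℓ i), B2 f (i + (1, 0)) := by
      rw [← Finset.sum_sub_distrib]
      exact Finset.sum_congr rfl fun i _ => g_eq2 f i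
    have e1 : ∑ i ∈ S.filter (fun i => R2 ℓ i), B2 f (i + (1, 0))
        = ∑ p ∈ (S.filter (fun i => R2 ℓ i)).image (· + (1, 0)), B2 f p :=
      (Finset.sum_image fun a _ b _ h => by
        simpa using congrArg (· - ((1 : ℤ), (0 : ℤ))) h).symm
    have e2 : ∑ p ∈ (S.filter (fun i => R2 ℓ i)).image (· + (1, 0)), B2 f p
        ≤ ∑ p ∈ (S.filter (fun i => R2 ℓ i)).filter (fun p => ¬ VP ℓ p), B2 f p := by
      apply sum_le_sum_of_support _ (b2_nonneg f hcomp)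
      intro p hp hne
      rw [Finset.mem_image] at hp
      obtain ⟨i, hi, rfl⟩ := hp
      rw [Finset.mem_filter] at hi
      rw [Finset.mem_filter, Finset.mem_filter]
      have hpS : i + (1, 0) ∈ S := by
        by_contra hn
        exact hne (b2_supp f hcomp _ (hdim0 _ hn))
      refine ⟨⟨hpS, R2_right hmono hi.2⟩, not_VP_right hmono hi.2⟩
    have e3 : ∑ i ∈ S.filter (fun i => R2 ℓ i), (kd f i (i + (0, 1)) : ℤ)
        = (∑ i ∈ (S.filter (fun i => R2 ℓ i)).filter (VP ℓ), (kd f i (i + (0, 1)) : ℤ))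
          + ∑ i ∈ (S.filter (fun i => R2 ℓ i)).filter (fun i => ¬ VP ℓ i),
              (kd f i (i + (0, 1)) : ℤ) :=
      (Finset.sum_filter_add_sum_filter_not _ _ _).symm
    have e4 : ∑ p ∈ (S.filter (fun i => R2 ℓ i)).filter (fun p => ¬ VP ℓ p), B2 f p
        ≤ ∑ i ∈ (S.filter (fun i => R2 ℓ i)).filter (fun i => ¬ VP ℓ i),
            (kd f i (i + (0, 1)) : ℤ) :=
      Finset.sum_le_sum fun p _ => b2_le_kd f hcomp p
    have e5 : (S.filter (fun i => R2 ℓ i)).filter (VP ℓ) = S.filter (VP ℓ) := by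
      ext a
      simp only [Finset.filter_filter, Finset.mem_filter]
      constructor
      · rintro ⟨h1, h2, h3⟩
        exact ⟨h1, h3⟩
      · rintro ⟨h1, h2⟩
        exact ⟨h1, VP_R2 hmono h2, h2⟩
    rw [e0, e3, e5, e1]
    linarith [e2, e4]
  have chainZ : (∑ j ∈ T, (kd f (ℓ j) (ℓ (j + 1)) : ℤ))
      ≤ (∑ p ∈ S.filter (VP ℓ), (kd f p (p + (0, 1)) : ℤ))
        + ∑ p ∈ S.filter (HP ℓ), (kd f p (p + (1, 0)) : ℤ) := by
    exact_mod_cast chain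
  have split : (∑ i ∈ S.filter (fun i => R2 ℓ i),
        ((finrank k (V i) : ℤ) - rk f i (i + (1, 0)) - rk f i (i + (0, 1))
          + rk f i (i + (1, 1))))
      + (∑ i ∈ S.filter (fun i => ¬ R2 ℓ i),
        ((finrank k (V i) : ℤ) - rk f i (i + (1, 0)) - rk f i (i + (0, 1))
          + rk f i (i + (1, 1))))
      = ∑ i ∈ S, ((finrank k (V i) : ℤ) - rk f i (i + (1, 0)) - rk f i (i + (0, 1))
          + rk f i (i + (1, 1))) :=
    Finset.sum_filter_add_sum_filter_not _ _ _
  linarith [hP1, hP2, chainZ, split]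


include hid hcomp in
lemma pointwise (S : Finset (ℤ × ℤ)) (hS : ∀ i ∉ S, Subsingleton (V i)) (i₀ : ℤ × ℤ) :
    (finrank k (V i₀) : ℤ)
      ≤ ∑ᶠ i : ℤ × ℤ, ((finrank k (V i) : ℤ)
        - finrank k (LinearMap.range (f i (i + (1, 0))
            (le_add_nonneg_pair' i 1 0 (by norm_num) (by norm_num))))
        - finrank k (LinearMap.range (f i (i + (0, 1))
            (le_add_nonneg_pair' i 0 1 (by norm_num) (by norm_num))))
        + finrank k (LinearMap.range (f i (i + (1, 1))
            (le_add_nonneg_pair' i 1 1 (by norm_num) (by norm_num))))) := by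
  classical
  have hdim0 : ∀ i, i ∉ S → finrank k (V i) = 0 := fun i hi =>
    have := hS i hi; Module.finrank_zero_of_subsingleton
  set n : ℕ := ∑ s ∈ S, (s.1 - i₀.1).natAbs with hn
  set c : ℤ := 1 + (n : ℤ) with hc
  have hc1 : 1 ≤ c := by omega
  set ℓ' : ℤ → ℤ × ℤ := fun j => i₀ + (j * c, j * c) with hℓ'
  have hmono' : Monotone ℓ' := by
    intro a b hab
    have hm := mul_le_mul_of_nonneg_right hab (show (0 : ℤ) ≤ c by omega)
    rw [hℓ', Prod.le_def]
    constructor <;> simp only [Prod.fst_add, Prod.snd_add] <;> omega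
  have hinj' : Function.Injective ℓ' := by
    intro a b hab
    rw [hℓ'] at hab
    have h1 := congrArg Prod.fst hab
    simp only [Prod.fst_add] at h1
    have h2 : a * c = b * c := by omega
    exact mul_right_cancel₀ (by omega) h2
  have hout : ∀ j : ℤ, j ≠ 0 → ℓ' j ∉ S := by
    intro j hj hmem
    have hle : ((ℓ' j).1 - i₀.1).natAbs ≤ n :=
      Finset.single_le_sum (f := fun s => (s.1 - i₀.1).natAbs)
        (fun s _ => Nat.zero_le _) hmem
    have h1 : (ℓ' j).1 - i₀.1 = j * c := by rw [hℓ']; simp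
    rw [h1, Int.natAbs_mul] at hle
    have h5 : c.natAbs ≤ j.natAbs * c.natAbs :=
      Nat.le_mul_of_pos_left _ (by omega)
    omega
  have hzero : ∀ j : ℤ, j ≠ 0 →
      ((finrank k (V (ℓ' j)) : ℤ)
        - finrank k (LinearMap.range (f (ℓ' j) (ℓ' (j + 1)) (hmono' (by simp))))) = 0 := by
    intro j hj
    have h1 : finrank k (V (ℓ' j)) = 0 := hdim0 _ (hout j hj)
    have h2 := LinearMap.finrank_range_le (f (ℓ' j) (ℓ' (j + 1)) (hmono' (by simp)))
    omega
  have hval : (∑ᶠ j : ℤ, ((finrank k (V (ℓ' j)) : ℤ)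
      - finrank k (LinearMap.range (f (ℓ' j) (ℓ' (j + 1)) (hmono' (by simp))))))
      = (finrank k (V i₀) : ℤ) := by
    rw [finsum_eq_single _ (0 : ℤ) (fun j hj => hzero j hj)]
    have h1 : ℓ' 0 = i₀ := by rw [hℓ']; simp
    have h2 : finrank k (V (ℓ' 0)) = finrank k (V i₀) := by rw [h1]
    have h3 : finrank k (V (ℓ' (0 + 1))) = 0 := hdim0 _ (hout 1 one_ne_zero)
    have h4 := Submodule.finrank_le (LinearMap.range (f (ℓ' 0) (ℓ' (0 + 1)) (hmono' (by simp))))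
    omega
  calc (finrank k (V i₀) : ℤ) = _ := hval.symm
    _ ≤ _ := key f hid hcomp S hS ℓ' hmono' hinj'

end Main

/-- **Slice monotonicity of the two-parameter count, and the pointwise-dimension
bound.**
Let `V` (with structure maps `f`) be a pointwise finite-dimensional representation of
`ℤ²` with finite support (contained in the finite set `S`), i.e. a finite-dimensional
bigraded `k[x,y]`-module, and let `ℓ : ℤ → ℤ²` be an injective monotonic map.  Then
`N²(V) ≥ N¹(ℓ*V)`, where
`N²(V) = dim V - dim xV - dim yV + dim xyV` is computed gradewise as the sum over all
grades `i` of `dim V_i` minus the ranks of the structure maps to `i+(1,0)` and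
`i+(0,1)` plus the rank of the structure map to `i+(1,1)`, and
`N¹(ℓ*V) = dim ℓ*V - dim z·ℓ*V` is the bar-count of the pullback one-parameter
module.  In particular, `N²(V) ≥ dim V_i` for every `i ∈ ℤ²`. -/
theorem stmt17 {k : Type*} [Field k] (V : ℤ × ℤ → Type*)
    [∀ i, AddCommGroup (V i)] [∀ i, Module k (V i)] [∀ i, FiniteDimensional k (V i)]
    (f : ∀ i j : ℤ × ℤ, i ≤ j → (V i →ₗ[k] V j))
    (hid : ∀ i, f i i le_rfl = LinearMap.id)
    (hcomp : ∀ (i j l : ℤ × ℤ) (hij : i ≤ j) (hjl : j ≤ l),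
      f i l (hij.trans hjl) = (f j l hjl) ∘ₗ (f i j hij))
    (S : Finset (ℤ × ℤ)) (hS : ∀ i ∉ S, Subsingleton (V i))
    (ℓ : ℤ → ℤ × ℤ) (hmono : Monotone ℓ) (hinj : Function.Injective ℓ) :
    ((∑ᶠ j : ℤ, ((finrank k (V (ℓ j)) : ℤ)
        - finrank k (LinearMap.range (f (ℓ j) (ℓ (j + 1)) (hmono (by omega))))))
      ≤ ∑ᶠ i : ℤ × ℤ, ((finrank k (V i) : ℤ)
        - finrank k (LinearMap.range (f i (i + (1, 0))
            (le_add_nonneg_pair i 1 0 (by omega) (by omega))))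
        - finrank k (LinearMap.range (f i (i + (0, 1))
            (le_add_nonneg_pair i 0 1 (by omega) (by omega))))
        + finrank k (LinearMap.range (f i (i + (1, 1))
            (le_add_nonneg_pair i 1 1 (by omega) (by omega))))))
    ∧ ∀ i₀ : ℤ × ℤ, (finrank k (V i₀) : ℤ)
      ≤ ∑ᶠ i : ℤ × ℤ, ((finrank k (V i) : ℤ)
        - finrank k (LinearMap.range (f i (i + (1, 0))
            (le_add_nonneg_pair i 1 0 (by omega) (by omega))))
        - finrank k (LinearMap.range (f i (i + (0, 1))
            (le_add_nonneg_pair i 0 1 (by omega) (by omega))))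
        + finrank k (LinearMap.range (f i (i + (1, 1))
            (le_add_nonneg_pair i 1 1 (by omega) (by omega))))) := by
  constructor
  · exact key f hid hcomp S hS ℓ hmono hinj
  · intro i₀
    exact pointwise f hid hcomp S hS i₀
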